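/- arXiv:2603.00716 — 5 statements merged into one kernel-verified Lean document; each statement's English description precedes it below -/
import Mathlib

section
/- Let λ > 0, let v_0, v_1, ..., v_n ∈ ℝ^d, and let Λ = λI + Σ_{i=1}^n v_i v_iᵀ. If the elliptical norm ‖v_0‖_{Λ^{-1}} := √(v_0ᵀ Λ^{-1} v_0) satisfies ‖v_0‖_{Λ^{-1}} ≤ ε, then there exist coefficients c_1, ..., c_n ∈ ℝ such that Σ_{i=1}^n c_i² ≤ ε² and ‖v_0 − Σ_{i=1}^n c_i v_i‖_2 ≤ √λ · ε. -/
open Matrix BigOperators Finset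

noncomputable def ellipNorm {d : ℕ} (V : Matrix (Fin d) (Fin d) ℝ) (x : Fin d → ℝ) : ℝ :=
  Real.sqrt (x ⬝ᵥ V.mulVec x)

noncomputable def l2norm {d : ℕ} (x : Fin d → ℝ) : ℝ :=
  Real.sqrt (x ⬝ᵥ x)

lemma sum_mulVec'' {d n : ℕ} (M : Fin n → Matrix (Fin d) (Fin d) ℝ) (x : Fin d → ℝ) :
    (∑ i : Fin n, M i) *ᵥ x = ∑ i : Fin n, (M i) *ᵥ x := by
  ext j
  simp only [mulVec, dotProduct, Finset.sum_apply, Matrix.sum_apply, Finset.sum_mul]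
  exact Finset.sum_comm

lemma dotProduct_sum'' {d n : ℕ} (x : Fin d → ℝ) (y : Fin n → Fin d → ℝ) :
    x ⬝ᵥ (∑ i : Fin n, y i) = ∑ i : Fin n, x ⬝ᵥ y i := by
  simp only [dotProduct, Finset.sum_apply, Finset.mul_sum]
  rw [Finset.sum_comm]

lemma vecMulVec_mulVec' {d : ℕ} (a b x : Fin d → ℝ) :
    (vecMulVec a b) *ᵥ x = (b ⬝ᵥ x) • a := by
  ext i
  simp [mulVec, dotProduct, vecMulVec_apply, Finset.mul_sum, mul_comm, mul_left_comm]

theorem stmt_0 {d n : ℕ} (lam ε : ℝ) (hlam : 0 < lam)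
    (v : Fin (n + 1) → Fin d → ℝ)
    (Λ : Matrix (Fin d) (Fin d) ℝ)
    (hΛ : Λ = lam • (1 : Matrix (Fin d) (Fin d) ℝ) +
      ∑ i : Fin n, vecMulVec (v i.succ) (v i.succ))
    (h0 : ellipNorm Λ⁻¹ (v 0) ≤ ε) :
    ∃ c : Fin n → ℝ,
      (∑ i : Fin n, (c i) ^ 2 ≤ ε ^ 2) ∧
      l2norm (v 0 - ∑ i : Fin n, c i • v i.succ) ≤ Real.sqrt lam * ε := by
  have hSnn : ∀ x : Fin d → ℝ,
      0 ≤ x ⬝ᵥ (∑ i : Fin n, vecMulVec (v i.succ) (v i.succ)) *ᵥ x := by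
    intro x
    rw [sum_mulVec'', dotProduct_sum'']
    refine Finset.sum_nonneg fun i _ => ?_
    rw [vecMulVec_mulVec', dotProduct_smul, smul_eq_mul]
    have : x ⬝ᵥ v i.succ = v i.succ ⬝ᵥ x := dotProduct_comm _ _
    rw [this]
    exact mul_self_nonneg _
  have hPD : Λ.PosDef := by
    refine Matrix.PosDef.of_dotProduct_mulVec_pos ?_ ?_
    · rw [hΛ]
      refine Matrix.IsHermitian.add ?_ ?_
      · rw [Matrix.IsHermitian, conjTranspose_smul, conjTranspose_one]; simp
      · unfold Matrix.IsHermitian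
        rw [conjTranspose_sum]
        refine Finset.sum_congr rfl fun i _ => ?_
        ext a b
        simp [vecMulVec_apply, conjTranspose_apply, mul_comm]
    · intro x hx
      have hsx : star x = x := by simp
      rw [hsx, hΛ, add_mulVec, dotProduct_add, smul_mulVec, one_mulVec,
        dotProduct_smul, smul_eq_mul]
      refine add_pos_of_pos_of_nonneg ?_ (hSnn x)
      refine mul_pos hlam ?_
      have := dotProduct_star_self_pos_iff (R := ℝ) (v := x) |>.2 hx
      simpa using this
  have hUnit : IsUnit Λ.det := hPD.det_pos.ne'.isUnit
  have hinv : Λ * Λ⁻¹ = 1 := Matrix.mul_nonsing_inv _ hUnit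
  set w : Fin d → ℝ := Λ⁻¹ *ᵥ v 0 with hw
  have hΛw : Λ *ᵥ w = v 0 := by
    rw [hw, mulVec_mulVec, hinv, one_mulVec]
  set c : Fin n → ℝ := fun i => v i.succ ⬝ᵥ w with hc
  have hexp : Λ *ᵥ w = lam • w + ∑ i : Fin n, c i • v i.succ := by
    rw [hΛ, add_mulVec, sum_mulVec'', smul_mulVec, one_mulVec]
    congr 1
    exact Finset.sum_congr rfl fun i _ => vecMulVec_mulVec' _ _ _
  have hres : v 0 - ∑ i : Fin n, c i • v i.succ = lam • w := by
    rw [← hΛw, hexp]; abel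
  have hq : w ⬝ᵥ v 0 = lam * (w ⬝ᵥ w) + ∑ i : Fin n, (c i) ^ 2 := by
    rw [← hΛw, hexp, dotProduct_add, dotProduct_smul, dotProduct_sum'', smul_eq_mul]
    congr 1
    refine Finset.sum_congr rfl fun i _ => ?_
    rw [dotProduct_smul, smul_eq_mul, sq, hc]
    congr 1
    exact dotProduct_comm _ _
  have hww : 0 ≤ w ⬝ᵥ w := by
    refine Finset.sum_nonneg fun i _ => mul_self_nonneg _
  have hcsq : 0 ≤ ∑ i : Fin n, (c i) ^ 2 :=
    Finset.sum_nonneg fun i _ => sq_nonneg _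
  have hq0 : 0 ≤ w ⬝ᵥ v 0 := by
    rw [hq]
    exact add_nonneg (mul_nonneg hlam.le hww) hcsq
  have hε : 0 ≤ ε := le_trans (Real.sqrt_nonneg _) h0
  have hqε : w ⬝ᵥ v 0 ≤ ε ^ 2 := by
    have h1 : ellipNorm Λ⁻¹ (v 0) = Real.sqrt (w ⬝ᵥ v 0) := by
      rw [ellipNorm, ← hw, dotProduct_comm]
    rw [h1] at h0
    calc w ⬝ᵥ v 0 = Real.sqrt (w ⬝ᵥ v 0) ^ 2 := (Real.sq_sqrt hq0).symm
      _ ≤ ε ^ 2 := pow_le_pow_left₀ (Real.sqrt_nonneg _) h0 2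
  refine ⟨c, ?_, ?_⟩
  · calc ∑ i : Fin n, (c i) ^ 2 ≤ lam * (w ⬝ᵥ w) + ∑ i : Fin n, (c i) ^ 2 := by
          linarith [mul_nonneg hlam.le hww]
      _ = w ⬝ᵥ v 0 := hq.symm
      _ ≤ ε ^ 2 := hqε
  · rw [hres, l2norm]
    have h2 : (lam • w) ⬝ᵥ (lam • w) = lam * (lam * (w ⬝ᵥ w)) := by
      rw [smul_dotProduct, dotProduct_smul, smul_eq_mul, smul_eq_mul]
    have h3 : lam * (w ⬝ᵥ w) ≤ ε ^ 2 := by linarith [hq ▸ hqε]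
    rw [h2]
    calc Real.sqrt (lam * (lam * (w ⬝ᵥ w))) ≤ Real.sqrt (lam * ε ^ 2) := by
          apply Real.sqrt_le_sqrt
          nlinarith
      _ = Real.sqrt lam * ε := by
          rw [Real.sqrt_mul hlam.le, Real.sqrt_sq hε]
end

section
/- Let κ ≥ 0, let δ_1, ..., δ_n be real numbers with |δ_i| ≤ κ for all i, and let φ_1, ..., φ_n ∈ ℝ^d. Let Λ = λI + Σ_{i=1}^n φ_i φ_iᵀ with λ > 0. Then ‖Σ_{i=1}^n φ_i δ_i‖²_{Λ^{-1}} ≤ n κ². -/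
open Matrix BigOperators Finset

lemma dotProduct_sum' {m ι : Type*} [Fintype m] (s : Finset ι) (y : m → ℝ) (f : ι → m → ℝ) :
    y ⬝ᵥ (∑ i ∈ s, f i) = ∑ i ∈ s, y ⬝ᵥ f i := by
  simp only [dotProduct, Finset.sum_apply, Finset.mul_sum]
  exact Finset.sum_comm

lemma sum_dotProduct' {m ι : Type*} [Fintype m] (s : Finset ι) (y : m → ℝ) (f : ι → m → ℝ) :
    (∑ i ∈ s, f i) ⬝ᵥ y = ∑ i ∈ s, f i ⬝ᵥ y := by
  simp only [dotProduct, Finset.sum_apply, Finset.sum_mul]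
  exact Finset.sum_comm

theorem stmt_1 {d n : ℕ} (lam κ : ℝ) (hlam : 0 < lam) (hκ : 0 ≤ κ)
    (δ : Fin n → ℝ) (hδ : ∀ i, |δ i| ≤ κ)
    (φ : Fin n → Fin d → ℝ)
    (Λ : Matrix (Fin d) (Fin d) ℝ)
    (hΛ : Λ = lam • (1 : Matrix (Fin d) (Fin d) ℝ) + ∑ i : Fin n, vecMulVec (φ i) (φ i)) :
    (ellipNorm Λ⁻¹ (∑ i : Fin n, δ i • φ i)) ^ 2 ≤ n * κ ^ 2 := by
  classical
  set x : Fin d → ℝ := ∑ i : Fin n, δ i • φ i with hx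
  -- quadratic form of Λ
  have hquad : ∀ y : Fin d → ℝ,
      y ⬝ᵥ Λ *ᵥ y = lam * (y ⬝ᵥ y) + ∑ i : Fin n, (φ i ⬝ᵥ y) ^ 2 := by
    intro y
    have hsum : (∑ i : Fin n, vecMulVec (φ i) (φ i)) *ᵥ y
        = ∑ i : Fin n, (vecMulVec (φ i) (φ i)) *ᵥ y :=
      map_sum (mulVec.addMonoidHomLeft y) _ _
    have hvv : ∀ i : Fin n, y ⬝ᵥ (vecMulVec (φ i) (φ i) *ᵥ y) = (φ i ⬝ᵥ y) ^ 2 := by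
      intro i
      simp only [vecMulVec_apply, mulVec, dotProduct, sq, Finset.mul_sum, Finset.sum_mul]
      rw [Finset.sum_comm]
      refine Finset.sum_congr rfl fun j _ => Finset.sum_congr rfl fun k _ => by ring
    rw [hΛ, add_mulVec, dotProduct_add, hsum, smul_mulVec, one_mulVec,
      dotProduct_smul, dotProduct_sum']
    simp [hvv, smul_eq_mul]
  have hyy_nonneg : ∀ y : Fin d → ℝ, 0 ≤ y ⬝ᵥ y := fun y =>
    Finset.sum_nonneg fun i _ => mul_self_nonneg _
  -- Λ is positive definite
  have hpos : Λ.PosDef := by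
    rw [posDef_iff_dotProduct_mulVec]
    constructor
    · show Λᴴ = Λ
      ext i j
      simp only [hΛ, conjTranspose_apply, Matrix.add_apply, Matrix.smul_apply,
        Matrix.one_apply, Matrix.sum_apply, vecMulVec_apply, star_trivial, smul_eq_mul]
      have h1 : (if j = i then (1:ℝ) else 0) = (if i = j then 1 else 0) := by
        simp [eq_comm]
      rw [h1]
      congr 1
      exact Finset.sum_congr rfl fun k _ => mul_comm (φ k j) (φ k i)
    · intro y hy
      rw [star_trivial, hquad]
      have h1 : 0 < y ⬝ᵥ y := by
        rcases Function.ne_iff.mp hy with ⟨i, hi⟩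
        have : 0 < y i * y i := mul_self_pos.mpr hi
        exact Finset.sum_pos' (fun j _ => mul_self_nonneg _) ⟨i, Finset.mem_univ i, this⟩
      have h2 : (0:ℝ) ≤ ∑ i : Fin n, (φ i ⬝ᵥ y) ^ 2 :=
        Finset.sum_nonneg fun i _ => sq_nonneg _
      nlinarith
  have hdet : IsUnit Λ.det := hpos.det_pos.ne'.isUnit
  set y : Fin d → ℝ := Λ⁻¹ *ᵥ x with hy
  have hxy : Λ *ᵥ y = x := by
    rw [hy, mulVec_mulVec, Matrix.mul_nonsing_inv Λ hdet, one_mulVec]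
  set S : ℝ := x ⬝ᵥ Λ⁻¹ *ᵥ x with hSdef
  have hS : S = y ⬝ᵥ Λ *ᵥ y := by rw [hxy, hSdef, hy, dotProduct_comm]
  have hSnonneg : 0 ≤ S := by
    rw [hS, hquad]
    have := hyy_nonneg y
    have h2 : (0:ℝ) ≤ ∑ i : Fin n, (φ i ⬝ᵥ y) ^ 2 :=
      Finset.sum_nonneg fun i _ => sq_nonneg _
    nlinarith
  have hc : ∑ i : Fin n, (φ i ⬝ᵥ y) ^ 2 ≤ S := by
    rw [hS, hquad]
    nlinarith [hyy_nonneg y]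
  have hSx : S = ∑ i : Fin n, δ i * (φ i ⬝ᵥ y) := by
    rw [hSdef, ← hy, hx, sum_dotProduct']
    exact Finset.sum_congr rfl fun i _ => by rw [smul_dotProduct, smul_eq_mul]
  have hδsq : ∑ i : Fin n, (δ i) ^ 2 ≤ n * κ ^ 2 := by
    calc ∑ i : Fin n, (δ i) ^ 2 ≤ ∑ i : Fin n, κ ^ 2 :=
          Finset.sum_le_sum fun i _ => by
            have := abs_le.mp (hδ i)
            nlinarith [this.1, this.2]
      _ = n * κ ^ 2 := by simp [Finset.sum_const, mul_comm]
  have hCS : S ^ 2 ≤ (∑ i : Fin n, (δ i) ^ 2) * (∑ i : Fin n, (φ i ⬝ᵥ y) ^ 2) := by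
    rw [hSx]
    exact Finset.sum_mul_sq_le_sq_mul_sq _ _ _
  have hkey : S ≤ n * κ ^ 2 := by
    have hn : (0:ℝ) ≤ (n : ℝ) * κ ^ 2 := by positivity
    nlinarith [Finset.sum_nonneg (fun i (_ : i ∈ Finset.univ) => sq_nonneg (φ i ⬝ᵥ y)),
      mul_le_mul_of_nonneg_right hδsq (Finset.sum_nonneg
        (fun i (_ : i ∈ Finset.univ) => sq_nonneg (φ i ⬝ᵥ y)))]
  have : (ellipNorm Λ⁻¹ x) ^ 2 = S := by
    rw [ellipNorm, Real.sq_sqrt hSnonneg]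
  rw [this]
  exact hkey
end

section
/- Let λ > 0, d ≥ 1, and let φ_1, ..., φ_D ∈ ℝ^d with ‖φ_i‖_2 ≤ 1 for all i. Define Σ_0 = λI and Σ_k = λI + Σ_{i=1}^k φ_i φ_iᵀ. Suppose that ‖φ_i‖_{Σ_{i−1}^{-1}} ≥ 2^{−l} for every 1 ≤ i ≤ D, for some l ≥ 1. Then D ≤ 2d·2^{2l}·ln(1 + D/(λd)). -/
open Matrix BigOperators Finset

noncomputable def covMat {d : ℕ} (lam : ℝ) (φ : ℕ → Fin d → ℝ) (k : ℕ) :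
    Matrix (Fin d) (Fin d) ℝ :=
  lam • (1 : Matrix (Fin d) (Fin d) ℝ) + ∑ i ∈ Finset.range k, vecMulVec (φ i) (φ i)

namespace Stmt4Aux

variable {d : ℕ}

lemma psd_vecMulVec (v : Fin d → ℝ) : (vecMulVec v v).PosSemidef := by
  have h : vecMulVec v v = (replicateRow Unit v)ᴴ * replicateRow Unit v := by
    rw [vecMulVec_eq Unit, conjTranspose_replicateRow]
    simp
  rw [h]
  exact posSemidef_conjTranspose_mul_self _

lemma psd_sum (φ : ℕ → Fin d → ℝ) (k : ℕ) :
    (∑ i ∈ Finset.range k, vecMulVec (φ i) (φ i)).PosSemidef := by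
  induction k with
  | zero => simpa using Matrix.PosSemidef.zero
  | succ n ih =>
    rw [Finset.sum_range_succ]
    exact ih.add (psd_vecMulVec _)

lemma covMat_posDef (lam : ℝ) (hlam : 0 < lam) (φ : ℕ → Fin d → ℝ) (k : ℕ) :
    (covMat lam φ k).PosDef := by
  have h1 : (lam • (1 : Matrix (Fin d) (Fin d) ℝ)).PosDef := by
    rw [smul_one_eq_diagonal]
    exact Matrix.posDef_diagonal_iff.2 fun i => hlam
  exact h1.add_posSemidef (psd_sum φ k)

lemma covMat_succ (lam : ℝ) (φ : ℕ → Fin d → ℝ) (k : ℕ) :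
    covMat lam φ (k + 1) = covMat lam φ k + vecMulVec (φ k) (φ k) := by
  simp [covMat, Finset.sum_range_succ, add_assoc]

lemma det_covMat_succ (lam : ℝ) (hlam : 0 < lam) (φ : ℕ → Fin d → ℝ) (k : ℕ) :
    (covMat lam φ (k + 1)).det =
      (covMat lam φ k).det * (1 + φ k ⬝ᵥ (covMat lam φ k)⁻¹ *ᵥ φ k) := by
  set A := covMat lam φ k with hA
  have hPD : A.PosDef := covMat_posDef lam hlam φ k
  have hunit : IsUnit A.det := isUnit_iff_ne_zero.2 (ne_of_gt hPD.det_pos)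
  rw [covMat_succ, vecMulVec_eq Unit, Matrix.det_add_replicateCol_mul_replicateRow hunit]
  congr 1
  rw [det_unique]
  simp [Matrix.mul_apply, Matrix.mulVec, dotProduct, Finset.mul_sum, Finset.sum_mul]
  rw [Finset.sum_comm]
  exact Finset.sum_congr rfl fun i _ => Finset.sum_congr rfl fun j _ => by ring

lemma trace_eq_sum_eigenvalues {n : ℕ} {A : Matrix (Fin n) (Fin n) ℝ} (hA : A.IsHermitian) :
    A.trace = ∑ i, hA.eigenvalues i := by
  conv_lhs => rw [hA.spectral_theorem, Unitary.conjStarAlgAut_apply]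
  rw [Matrix.trace_mul_cycle,
    (Matrix.mem_unitaryGroup_iff').mp (Matrix.IsHermitian.eigenvectorUnitary hA).2, one_mul]
  simp [Matrix.trace_diagonal]

/-- AM-GM bound : `det A ≤ (trace A / d) ^ d` for a PSD matrix. -/
lemma det_le_trace_div_pow {n : ℕ} (hn : 1 ≤ n) {A : Matrix (Fin n) (Fin n) ℝ}
    (hA : A.PosSemidef) : A.det ≤ (A.trace / n) ^ n := by
  have hH := hA.isHermitian
  have hev : ∀ i, 0 ≤ hH.eigenvalues i := hA.eigenvalues_nonneg
  have hdet : A.det = ∏ i, hH.eigenvalues i := by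
    simpa using hH.det_eq_prod_eigenvalues
  have htr : A.trace = ∑ i, hH.eigenvalues i := trace_eq_sum_eigenvalues hH
  have hnpos : (0:ℝ) < n := by exact_mod_cast hn
  have hamgm := Real.geom_mean_le_arith_mean_weighted Finset.univ
    (fun _ => (n : ℝ)⁻¹) hH.eigenvalues (fun _ _ => by positivity)
    (by simp [Finset.card_univ, mul_inv_cancel₀ (ne_of_gt hnpos)]) (fun i _ => hev i)
  -- hamgm : ∏ i, μ i ^ (1/n) ≤ ∑ i, (1/n) * μ i
  have hprod : (∏ i, hH.eigenvalues i ^ ((n:ℝ)⁻¹)) ^ (n : ℕ) = ∏ i, hH.eigenvalues i := by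
    rw [← Finset.prod_pow]
    refine Finset.prod_congr rfl fun i _ => ?_
    rw [← Real.rpow_natCast (hH.eigenvalues i ^ ((n:ℝ)⁻¹)) n, ← Real.rpow_mul (hev i),
      inv_mul_cancel₀ (ne_of_gt hnpos), Real.rpow_one]
  have hsum : (∑ i, (n:ℝ)⁻¹ * hH.eigenvalues i) = A.trace / n := by
    rw [← Finset.mul_sum, htr]; ring
  calc A.det = (∏ i, hH.eigenvalues i ^ ((n:ℝ)⁻¹)) ^ (n:ℕ) := by rw [hprod, hdet]
    _ ≤ (A.trace / n) ^ (n:ℕ) := by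
        apply pow_le_pow_left₀ (Finset.prod_nonneg fun i _ => Real.rpow_nonneg (hev i) _)
        rw [← hsum]; exact hamgm

lemma det_covMat (lam : ℝ) (hlam : 0 < lam) (φ : ℕ → Fin d → ℝ) (k : ℕ) :
    (covMat lam φ k).det =
      lam ^ d * ∏ i ∈ Finset.range k, (1 + φ i ⬝ᵥ (covMat lam φ i)⁻¹ *ᵥ φ i) := by
  induction k with
  | zero => simp [covMat, Matrix.det_smul]
  | succ n ih => rw [det_covMat_succ lam hlam, ih, Finset.prod_range_succ]; ring

lemma trace_covMat (lam : ℝ) (φ : ℕ → Fin d → ℝ) (k : ℕ) :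
    (covMat lam φ k).trace = lam * d + ∑ i ∈ Finset.range k, φ i ⬝ᵥ φ i := by
  rw [covMat, Matrix.trace_add, Matrix.trace_smul, Matrix.trace_one, Matrix.trace_sum]
  have h1 : lam • (Fintype.card (Fin d) : ℝ) = lam * d := by simp [smul_eq_mul]
  have h2 : ∀ i : ℕ, (vecMulVec (φ i) (φ i)).trace = φ i ⬝ᵥ φ i := fun i => by
    simp [Matrix.trace, Matrix.diag, vecMulVec_apply, dotProduct]
  rw [h1]
  congr 1

end Stmt4Aux

theorem stmt_4 {d : ℕ} (hd : 1 ≤ d) (lam : ℝ) (hlam : 0 < lam)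
    (D l : ℕ) (hl : 1 ≤ l) (φ : ℕ → Fin d → ℝ)
    (hφ : ∀ i, l2norm (φ i) ≤ 1)
    (hbig : ∀ i < D, (2 : ℝ) ^ (-(l : ℤ)) ≤ ellipNorm (covMat lam φ i)⁻¹ (φ i)) :
    (D : ℝ) ≤ 2 * d * 2 ^ (2 * l) * Real.log (1 + D / (lam * d)) := by
  set u : ℕ → ℝ := fun i => φ i ⬝ᵥ (covMat lam φ i)⁻¹ *ᵥ φ i with hu_def
  set a : ℝ := ((2 : ℝ) ^ (-(l : ℤ))) ^ 2 with ha_def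
  have hdpos : (0 : ℝ) < d := by exact_mod_cast hd
  have hx2 : (2 : ℝ) ≤ (2 : ℝ) ^ l := by
    calc (2:ℝ) = 2 ^ 1 := (pow_one 2).symm
    _ ≤ 2 ^ l := pow_le_pow_right₀ one_le_two hl
  have hzpow : (2 : ℝ) ^ (-(l : ℤ)) = ((2 : ℝ) ^ l)⁻¹ := by
    rw [_root_.zpow_neg, zpow_natCast]
  have hapos : 0 < a := by positivity
  have ha1 : a * 2 ^ (2 * l) = 1 := by
    rw [ha_def, hzpow, pow_mul']
    have : ((2:ℝ) ^ l) ≠ 0 := by positivity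
    field_simp
  have ha4 : a ≤ 1 / 4 := by
    rw [ha_def, hzpow]
    have h1 : ((2:ℝ) ^ l)⁻¹ ≤ 1 / 2 := by
      rw [inv_le_comm₀ (by positivity) (by norm_num)]
      linarith
    nlinarith [inv_nonneg.2 (le_of_lt (show (0:ℝ) < 2 ^ l by positivity))]
  have hu : ∀ i < D, a ≤ u i := by
    intro i hi
    have h := hbig i hi
    rw [ellipNorm] at h
    exact (Real.le_sqrt' (by positivity)).1 h
  have hupos : ∀ i < D, 0 < u i := fun i hi => lt_of_lt_of_le hapos (hu i hi)
  -- pointwise log bound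
  have hlog : ∀ i < D, a ≤ 2 * Real.log (1 + u i) := by
    intro i hi
    have hui := hu i hi
    have hu0 := hupos i hi
    have h1u : (0:ℝ) < 1 + u i := by linarith
    have hlb := Real.one_sub_inv_le_log_of_pos h1u
    have hinv : (1 + u i) * (1 + u i)⁻¹ = 1 := mul_inv_cancel₀ (ne_of_gt h1u)
    rcases le_total (u i) 1 with h1 | h1
    · nlinarith [hinv, hlb, hui, h1, hu0, ha4]
    · have hinv2 : (1 + u i)⁻¹ ≤ 1 / 2 := by
        rw [inv_le_comm₀ h1u (by norm_num)]
        linarith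
      linarith
  -- sum bound
  have hsum : (D : ℝ) * a ≤ 2 * ∑ i ∈ Finset.range D, Real.log (1 + u i) := by
    have h := Finset.sum_le_sum (fun i hi => hlog i (Finset.mem_range.1 hi))
    simp only [Finset.sum_const, Finset.card_range, nsmul_eq_mul, Finset.mul_sum] at h ⊢
    exact h
  -- determinant / trace bound
  have hPSD : (covMat lam φ D).PosSemidef := (Stmt4Aux.covMat_posDef lam hlam φ D).posSemidef
  have hdet := Stmt4Aux.det_covMat lam hlam φ D
  have htr := Stmt4Aux.trace_covMat lam φ D
  have hdot : ∀ i, φ i ⬝ᵥ φ i ≤ 1 := by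
    intro i
    have h := hφ i
    rw [l2norm] at h
    have hnn : 0 ≤ φ i ⬝ᵥ φ i := Finset.sum_nonneg fun j _ => mul_self_nonneg _
    nlinarith [Real.sq_sqrt hnn, Real.sqrt_nonneg (φ i ⬝ᵥ φ i)]
  have htrle : (covMat lam φ D).trace ≤ lam * d + D := by
    rw [htr]
    have : ∑ i ∈ Finset.range D, φ i ⬝ᵥ φ i ≤ ∑ i ∈ Finset.range D, (1:ℝ) :=
      Finset.sum_le_sum fun i _ => hdot i
    simpa using this
  have hc0 : (0:ℝ) < 1 + D / (lam * d) := by positivity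
  have htrnn : (0:ℝ) ≤ (covMat lam φ D).trace := by
    rw [htr]
    have : (0:ℝ) ≤ ∑ i ∈ Finset.range D, φ i ⬝ᵥ φ i :=
      Finset.sum_nonneg fun j _ => Finset.sum_nonneg fun k _ => mul_self_nonneg _
    positivity
  have hkey : ∏ i ∈ Finset.range D, (1 + u i) ≤ (1 + D / (lam * d)) ^ d := by
    have h1 := Stmt4Aux.det_le_trace_div_pow hd hPSD
    have h2 : ((covMat lam φ D).trace / d) ^ d ≤ ((lam * d + D) / d) ^ d := by
      apply pow_le_pow_left₀ (div_nonneg htrnn (le_of_lt hdpos))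
      gcongr
    have h3 : ((lam * d + (D:ℝ)) / d) ^ d = lam ^ d * (1 + D / (lam * d)) ^ d := by
      rw [← mul_pow]
      congr 1
      field_simp
    have h4 : lam ^ d * ∏ i ∈ Finset.range D, (1 + u i)
        ≤ lam ^ d * (1 + D / (lam * d)) ^ d := by
      rw [← hdet, ← h3]
      exact h1.trans h2
    exact le_of_mul_le_mul_left h4 (pow_pos hlam d)
  have hppos : ∀ i ∈ Finset.range D, (0:ℝ) < 1 + u i := fun i hi => by
    have := hupos i (Finset.mem_range.1 hi); linarith
  have hlogsum : ∑ i ∈ Finset.range D, Real.log (1 + u i)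
      = Real.log (∏ i ∈ Finset.range D, (1 + u i)) :=
    (Real.log_prod fun i hi => ne_of_gt (hppos i hi)).symm
  have hlogle : ∑ i ∈ Finset.range D, Real.log (1 + u i)
      ≤ (d : ℝ) * Real.log (1 + D / (lam * d)) := by
    rw [hlogsum, ← Real.log_pow]
    exact Real.log_le_log (Finset.prod_pos hppos) hkey
  have hfinal : (D : ℝ) * a ≤ 2 * ((d : ℝ) * Real.log (1 + D / (lam * d))) := by
    calc (D : ℝ) * a ≤ 2 * ∑ i ∈ Finset.range D, Real.log (1 + u i) := hsum
    _ ≤ 2 * ((d : ℝ) * Real.log (1 + D / (lam * d))) := by linarith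
  calc (D : ℝ) = (D : ℝ) * a * 2 ^ (2 * l) := by rw [mul_assoc, ha1, mul_one]
  _ ≤ 2 * ((d : ℝ) * Real.log (1 + D / (lam * d))) * 2 ^ (2 * l) :=
      mul_le_mul_of_nonneg_right hfinal (by positivity)
  _ = 2 * d * 2 ^ (2 * l) * Real.log (1 + D / (lam * d)) := by ring
end

section
/- Let λ > 0 and let φ_1, φ_2, ... ∈ ℝ^d with ‖φ_i‖_2 ≤ 1 for all i. Define Σ_k = λI + Σ_{i=1}^k φ_i φ_iᵀ. For any D ≥ 1, Σ_{i=1}^D min(1, ‖φ_i‖²_{Σ_{i−1}^{-1}}) ≤ 2 ln(det Σ_D / det Σ_0) ≤ 2d · ln(1 + D/(λd)). -/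
open Matrix BigOperators Finset

lemma posSemidef_vecMulVec {d : ℕ} (u : Fin d → ℝ) : (vecMulVec u u).PosSemidef := by
  refine PosSemidef.of_dotProduct_mulVec_nonneg ?_ ?_
  · ext i j; simp [vecMulVec_apply, conjTranspose_apply, mul_comm]
  · intro x
    have h : vecMulVec u u *ᵥ x = (u ⬝ᵥ x) • u := by
      ext i
      simp [vecMulVec_apply, mulVec, dotProduct, Finset.sum_mul, Finset.mul_sum]
      exact Finset.sum_congr rfl fun j _ => by ring
    rw [h]
    simp only [star_trivial, dotProduct_smul, smul_eq_mul]
    rw [dotProduct_comm]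
    exact mul_self_nonneg _

lemma covMat_posDef {d : ℕ} {lam : ℝ} (hlam : 0 < lam) (φ : ℕ → Fin d → ℝ) (k : ℕ) :
    (covMat lam φ k).PosDef := by
  apply Matrix.PosDef.add_posSemidef
  · rw [smul_one_eq_diagonal]
    exact posDef_diagonal_iff.mpr fun _ => hlam
  · exact Finset.sum_induction _ _ (fun a b ha hb => ha.add hb) Matrix.PosSemidef.zero
      fun i _ => posSemidef_vecMulVec (φ i)

lemma covMat_succ {d : ℕ} (lam : ℝ) (φ : ℕ → Fin d → ℝ) (k : ℕ) :
    covMat lam φ (k + 1) = covMat lam φ k + vecMulVec (φ k) (φ k) := by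
  simp [covMat, Finset.sum_range_succ, add_assoc]

lemma covMat_det_succ {d : ℕ} {lam : ℝ} (hlam : 0 < lam) (φ : ℕ → Fin d → ℝ) (k : ℕ) :
    (covMat lam φ (k + 1)).det
      = (covMat lam φ k).det * (1 + φ k ⬝ᵥ (covMat lam φ k)⁻¹ *ᵥ φ k) := by
  have hA := covMat_posDef hlam φ k
  have hdet : IsUnit (covMat lam φ k).det := (isUnit_iff_ne_zero).mpr hA.det_pos.ne'
  rw [covMat_succ, vecMulVec_eq Unit, Matrix.det_add_replicateCol_mul_replicateRow hdet]
  congr 1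
  rw [Matrix.det_unique]
  simp [Matrix.mul_apply, Matrix.replicateRow, Matrix.replicateCol, dotProduct, mulVec, Finset.mul_sum,
    Finset.sum_mul]
  rw [Finset.sum_comm]
  exact Finset.sum_congr rfl fun i _ => Finset.sum_congr rfl fun j _ => by ring


lemma trace_eq_sum_eigenvalues' {d : ℕ} {A : Matrix (Fin d) (Fin d) ℝ} (hA : A.IsHermitian) :
    A.trace = ∑ i, hA.eigenvalues i := by
  simpa using hA.trace_eq_sum_eigenvalues

lemma covMat_trace {d : ℕ} (lam : ℝ) (φ : ℕ → Fin d → ℝ) (k : ℕ) :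
    (covMat lam φ k).trace = lam * d + ∑ i ∈ Finset.range k, (φ i ⬝ᵥ φ i) := by
  rw [covMat, Matrix.trace_add, Matrix.trace_smul, Matrix.trace_one, Matrix.trace_sum]
  simp only [smul_eq_mul, Fintype.card_fin]
  rfl

lemma log_sum_lemma {d : ℕ} {lam : ℝ} (hlam : 0 < lam) (φ : ℕ → Fin d → ℝ) (D : ℕ) :
    Real.log ((covMat lam φ D).det / (covMat lam φ 0).det)
      = ∑ i ∈ Finset.range D, Real.log (1 + φ i ⬝ᵥ (covMat lam φ i)⁻¹ *ᵥ φ i) := by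
  rw [Real.log_div (covMat_posDef hlam φ D).det_pos.ne' (covMat_posDef hlam φ 0).det_pos.ne']
  induction D with
  | zero => simp
  | succ k ih =>
    rw [Finset.sum_range_succ, ← ih, covMat_det_succ hlam,
      Real.log_mul (covMat_posDef hlam φ k).det_pos.ne']
    · ring
    · have h0 : 0 ≤ φ k ⬝ᵥ (covMat lam φ k)⁻¹ *ᵥ φ k := by
        have := ((covMat_posDef hlam φ k).inv.posSemidef).dotProduct_mulVec_nonneg (φ k)
        simpa using this
      positivity

lemma quad_nonneg {d : ℕ} {lam : ℝ} (hlam : 0 < lam) (φ : ℕ → Fin d → ℝ) (k : ℕ) :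
    0 ≤ φ k ⬝ᵥ (covMat lam φ k)⁻¹ *ᵥ φ k := by
  have := ((covMat_posDef hlam φ k).inv.posSemidef).dotProduct_mulVec_nonneg (φ k)
  simpa using this

lemma min_le_two_log {w : ℝ} (hw : 0 ≤ w) : min 1 w ≤ 2 * Real.log (1 + w) := by
  have h1w : (0:ℝ) < 1 + w := by linarith
  rcases le_total w 1 with h | h
  · rw [min_eq_right h]
    have hlog : 1 - (1 + w)⁻¹ ≤ Real.log (1 + w) := by
      have := Real.log_le_sub_one_of_pos (inv_pos.mpr h1w)
      rw [Real.log_inv] at this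
      linarith
    have hv : (1 + w) * (1 + w)⁻¹ = 1 := mul_inv_cancel₀ h1w.ne'
    nlinarith [inv_nonneg.mpr h1w.le]
  · rw [min_eq_left h]
    have h2 : Real.log 2 ≤ Real.log (1 + w) :=
      Real.log_le_log (by norm_num) (by linarith)
    have := Real.log_two_gt_d9
    linarith


lemma dot_le_one {d : ℕ} {x : Fin d → ℝ} (h : l2norm x ≤ 1) : x ⬝ᵥ x ≤ 1 := by
  have h0 : 0 ≤ x ⬝ᵥ x := Finset.sum_nonneg fun i _ => mul_self_nonneg _
  have h' : Real.sqrt (x ⬝ᵥ x) ≤ 1 := h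
  nlinarith [Real.sq_sqrt h0, Real.sqrt_nonneg (x ⬝ᵥ x)]

lemma log_det_le {d : ℕ} {lam : ℝ} (hlam : 0 < lam) (φ : ℕ → Fin d → ℝ)
    (hφ : ∀ i, l2norm (φ i) ≤ 1) (D : ℕ) :
    Real.log ((covMat lam φ D).det / (covMat lam φ 0).det)
      ≤ d * Real.log (1 + D / (lam * d)) := by
  rcases Nat.eq_zero_or_pos d with hd | hd
  · subst hd
    simp [Matrix.det_fin_zero]
  have hdpos : (0:ℝ) < d := by exact_mod_cast hd
  have hA := covMat_posDef hlam φ D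
  have hH := hA.isHermitian
  have hev : ∀ i, 0 < hH.eigenvalues i := hA.eigenvalues_pos
  have hdet : (covMat lam φ D).det = ∏ i, hH.eigenvalues i := by
    simpa using hH.det_eq_prod_eigenvalues
  have htr : ∑ i, hH.eigenvalues i ≤ lam * d + D := by
    rw [← trace_eq_sum_eigenvalues' hH, covMat_trace]
    have hle : ∑ i ∈ Finset.range D, (φ i ⬝ᵥ φ i) ≤ ∑ _i ∈ Finset.range D, (1:ℝ) :=
      Finset.sum_le_sum fun i _ => dot_le_one (hφ i)
    simpa using hle
  have hJ := (strictConcaveOn_log_Ioi.concaveOn).le_map_sum (t := (Finset.univ : Finset (Fin d)))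
      (w := fun _ => (d:ℝ)⁻¹) (p := hH.eigenvalues) (fun i _ => by positivity)
      (by simp [Finset.card_univ]; field_simp) (fun i _ => hev i)
  simp only [smul_eq_mul, ← Finset.mul_sum] at hJ
  have hsumpos : 0 < ∑ i, hH.eigenvalues i :=
    Finset.sum_pos (fun i _ => hev i) (by simp [Finset.univ_nonempty_iff, Fin.pos_iff_nonempty.mp hd])
  have hlogdet : Real.log (covMat lam φ D).det ≤ d * Real.log ((lam * d + D) / d) := by
    rw [hdet, Real.log_prod fun i _ => (hev i).ne']
    have h1 : ∑ i, Real.log (hH.eigenvalues i) ≤ d * Real.log ((d:ℝ)⁻¹ * ∑ i, hH.eigenvalues i) := by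
      have := mul_le_mul_of_nonneg_left hJ hdpos.le
      calc ∑ i, Real.log (hH.eigenvalues i)
          = (d:ℝ) * ((d:ℝ)⁻¹ * ∑ i, Real.log (hH.eigenvalues i)) := by field_simp
        _ ≤ (d:ℝ) * Real.log ((d:ℝ)⁻¹ * ∑ i, hH.eigenvalues i) := this
    refine h1.trans (mul_le_mul_of_nonneg_left ?_ hdpos.le)
    apply Real.log_le_log (by positivity)
    rw [div_eq_inv_mul]
    exact mul_le_mul_of_nonneg_left htr (by positivity)
  have hdet0 : (covMat lam φ 0).det = lam ^ d := by
    simp [covMat, Matrix.det_smul]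
  rw [Real.log_div hA.det_pos.ne' (covMat_posDef hlam φ 0).det_pos.ne', hdet0, Real.log_pow]
  have hkey : Real.log (1 + (D:ℝ) / (lam * d)) = Real.log ((lam * d + D) / d) - Real.log lam := by
    rw [← Real.log_div (by positivity) hlam.ne']
    congr 1
    rw [div_div, mul_comm (d:ℝ) lam, add_div, div_self (by positivity : (lam * (d:ℝ)) ≠ 0)]
  rw [hkey]
  nlinarith [hlogdet]

theorem stmt_5 {d : ℕ} (lam : ℝ) (hlam : 0 < lam)
    (φ : ℕ → Fin d → ℝ) (hφ : ∀ i, l2norm (φ i) ≤ 1)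
    (D : ℕ) (hD : 1 ≤ D) :
    (∑ i ∈ Finset.range D, min 1 ((ellipNorm (covMat lam φ i)⁻¹ (φ i)) ^ 2)
        ≤ 2 * Real.log ((covMat lam φ D).det / (covMat lam φ 0).det)) ∧
    2 * Real.log ((covMat lam φ D).det / (covMat lam φ 0).det)
        ≤ 2 * d * Real.log (1 + D / (lam * d)) := by
  constructor
  · rw [log_sum_lemma hlam, Finset.mul_sum]
    apply Finset.sum_le_sum
    intro i _
    have hw := quad_nonneg hlam φ i
    have hsq : (ellipNorm (covMat lam φ i)⁻¹ (φ i)) ^ 2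
        = φ i ⬝ᵥ (covMat lam φ i)⁻¹ *ᵥ φ i := Real.sq_sqrt hw
    rw [hsq]
    exact min_le_two_log hw
  · have h := log_det_le hlam φ hφ D
    nlinarith [h]
end

section
/- Let Σ = λI + Σ_{i=1}^k φ_i φ_iᵀ with λ > 0 and ‖φ_i‖_2 ≤ 1 for all i. Then det(Σ)^{1/2} · det(λI)^{−1/2} ≤ (1 + k/(λd))^{d/2}, i.e., (1/2)·ln(det Σ / det(λI)) ≤ (d/2)·ln(1 + k/(λd)). -/
open Matrix BigOperators Finset Real

lemma trace_eq_sum_eigs {n : Type*} [Fintype n] [DecidableEq n]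
    {A : Matrix n n ℝ} (hA : A.IsHermitian) :
    A.trace = ∑ i, hA.eigenvalues i := by
  simpa using hA.trace_eq_sum_eigenvalues

theorem stmt_11 {d k : ℕ} (hd : 1 ≤ d) (lam : ℝ) (hlam : 0 < lam)
    (φ : Fin k → Fin d → ℝ) (hφ : ∀ i, l2norm (φ i) ≤ 1)
    (Sig : Matrix (Fin d) (Fin d) ℝ)
    (hSig : Sig = lam • (1 : Matrix (Fin d) (Fin d) ℝ) + ∑ i : Fin k, vecMulVec (φ i) (φ i)) :
    Sig.det ^ ((1 : ℝ) / 2) * (lam • (1 : Matrix (Fin d) (Fin d) ℝ)).det ^ (-(1 : ℝ) / 2)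
      ≤ (1 + k / (lam * d)) ^ ((d : ℝ) / 2) ∧
    (1 / 2) * Real.log (Sig.det / (lam • (1 : Matrix (Fin d) (Fin d) ℝ)).det)
      ≤ (d / 2) * Real.log (1 + k / (lam * d)) := by
  have hd0 : (0 : ℝ) < d := by exact_mod_cast hd
  -- dot products of φ's bounded by 1
  have hdp : ∀ i, φ i ⬝ᵥ φ i ≤ 1 := by
    intro i
    have h1 := hφ i
    have h0 : 0 ≤ φ i ⬝ᵥ φ i :=
      Finset.sum_nonneg fun j _ => mul_self_nonneg _
    have := Real.sq_sqrt h0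
    unfold l2norm at h1
    nlinarith [Real.sqrt_nonneg (φ i ⬝ᵥ φ i)]
  -- key quadratic form identity
  have key : ∀ (w x : Fin d → ℝ), x ⬝ᵥ (vecMulVec w w *ᵥ x) = (w ⬝ᵥ x) ^ 2 := by
    intro w x
    simp only [dotProduct, mulVec, vecMulVec, Matrix.of_apply, Finset.mul_sum]
    rw [sq, Finset.sum_mul_sum]
    exact Finset.sum_congr rfl fun j _ => Finset.sum_congr rfl fun l _ => by ring
  -- Sig is positive semidefinite
  have hPS : Sig.PosSemidef := by
    rw [Matrix.posSemidef_iff_dotProduct_mulVec]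
    constructor
    · rw [hSig]
      unfold Matrix.IsHermitian
      ext i j
      simp [Matrix.add_apply, Matrix.sum_apply, Matrix.one_apply, vecMulVec,
        Matrix.conjTranspose_apply, mul_comm, eq_comm]
    · intro x
      have hx : star x = x := by ext j; simp
      rw [hx, hSig, Matrix.add_mulVec, dotProduct_add]
      have hsum : (∑ i : Fin k, vecMulVec (φ i) (φ i)) *ᵥ x
          = ∑ i : Fin k, (vecMulVec (φ i) (φ i)) *ᵥ x := by
        ext j
        simp [mulVec, dotProduct, Matrix.sum_apply, Finset.sum_mul]
        rw [Finset.sum_comm]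
      rw [hsum]
      have hds : x ⬝ᵥ (∑ i : Fin k, (vecMulVec (φ i) (φ i)) *ᵥ x)
          = ∑ i : Fin k, x ⬝ᵥ ((vecMulVec (φ i) (φ i)) *ᵥ x) := by
        simp only [dotProduct, Finset.sum_apply, Finset.mul_sum]
        rw [Finset.sum_comm]
      rw [hds]
      have h1 : x ⬝ᵥ ((lam • (1 : Matrix (Fin d) (Fin d) ℝ)) *ᵥ x) = lam * (x ⬝ᵥ x) := by
        rw [Matrix.smul_mulVec, Matrix.one_mulVec, dotProduct_smul]; rfl
      rw [h1]
      have h2 : 0 ≤ lam * (x ⬝ᵥ x) :=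
        mul_nonneg hlam.le (Finset.sum_nonneg fun j _ => mul_self_nonneg _)
      have h3 : 0 ≤ ∑ i : Fin k, x ⬝ᵥ ((vecMulVec (φ i) (φ i)) *ᵥ x) :=
        Finset.sum_nonneg fun i _ => by rw [key]; positivity
      exact add_nonneg h2 h3
  have hH : Sig.IsHermitian := hPS.1
  set ev := hH.eigenvalues with hev
  have hnn : ∀ i, 0 ≤ ev i := hPS.eigenvalues_nonneg
  have hdet : Sig.det = ∏ i, ev i := by
    have := hH.det_eq_prod_eigenvalues
    simpa using this
  -- trace bound
  have htrace : Sig.trace ≤ lam * d + k := by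
    rw [hSig, Matrix.trace_add, Matrix.trace_smul, Matrix.trace_one, Matrix.trace_sum]
    have h1 : ∀ i : Fin k, (vecMulVec (φ i) (φ i)).trace = φ i ⬝ᵥ φ i := by
      intro i
      simp [Matrix.trace, Matrix.diag, vecMulVec, dotProduct]
    have h2 : ∑ i : Fin k, (vecMulVec (φ i) (φ i)).trace ≤ (k : ℝ) := by
      calc ∑ i : Fin k, (vecMulVec (φ i) (φ i)).trace
          ≤ ∑ _i : Fin k, (1 : ℝ) := Finset.sum_le_sum fun i _ => (h1 i).le.trans (hdp i)
        _ = k := by simp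
    have : (Fintype.card (Fin d) : ℝ) = d := by simp
    simp only [smul_eq_mul, this]
    linarith
  have hsumev : ∑ i, ev i ≤ lam * d + k := by
    rw [← trace_eq_sum_eigs hH]; exact htrace
  -- AM-GM
  have hamgm : (∏ i, ev i) ^ ((d : ℝ))⁻¹ ≤ (∑ i, ev i) / d := by
    have := Real.geom_mean_le_arith_mean (Finset.univ : Finset (Fin d)) (fun _ => 1) ev
      (fun _ _ => zero_le_one) (by simp [hd0]) (fun i _ => hnn i)
    simpa using this
  have hprodnn : 0 ≤ ∏ i, ev i := Finset.prod_nonneg fun i _ => hnn i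
  have hB1 : (1 : ℝ) ≤ 1 + k / (lam * d) := by
    have : 0 ≤ (k : ℝ) / (lam * d) := by positivity
    linarith
  set B : ℝ := 1 + k / (lam * d) with hBdef
  have hB0 : 0 < B := lt_of_lt_of_le one_pos hB1
  -- det Sig ≤ lam^d * B^d
  have hdetle : Sig.det ≤ lam ^ d * B ^ d := by
    have h1 : (∑ i, ev i) / d ≤ lam * B := by
      have : lam * B = (lam * d + k) / d := by
        rw [hBdef]
        field_simp
      rw [this]
      gcongr
    have h2 : (∏ i, ev i) ^ ((d : ℝ))⁻¹ ≤ lam * B := hamgm.trans h1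
    have h3 : ∏ i, ev i = ((∏ i, ev i) ^ ((d : ℝ))⁻¹) ^ d := by
      rw [← Real.rpow_natCast ((∏ i, ev i) ^ ((d : ℝ))⁻¹) d, ← Real.rpow_mul hprodnn]
      rw [inv_mul_cancel₀ (by positivity : (d : ℝ) ≠ 0), Real.rpow_one]
    rw [hdet, h3, ← mul_pow]
    exact pow_le_pow_left₀ (Real.rpow_nonneg hprodnn _) h2 d
  have hdetlamI : (lam • (1 : Matrix (Fin d) (Fin d) ℝ)).det = lam ^ d := by
    rw [Matrix.det_smul, Matrix.det_one]
    simp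
  have hL0 : (0 : ℝ) < lam ^ d := pow_pos hlam d
  have hdetnn : 0 ≤ Sig.det := hdet ▸ hprodnn
  constructor
  · -- rpow part
    rw [hdetlamI]
    have hhalf : (0 : ℝ) ≤ 1 / 2 := by norm_num
    have h1 : Sig.det ^ ((1 : ℝ) / 2) ≤ (lam ^ d * B ^ d) ^ ((1 : ℝ) / 2) :=
      Real.rpow_le_rpow hdetnn hdetle hhalf
    have h2 : (lam ^ d * B ^ d) ^ ((1 : ℝ) / 2)
        = (lam ^ d) ^ ((1 : ℝ) / 2) * B ^ ((d : ℝ) / 2) := by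
      rw [Real.mul_rpow hL0.le (by positivity), ← Real.rpow_natCast B d,
        ← Real.rpow_mul hB0.le]
      ring_nf
    have h3 : (lam ^ d : ℝ) ^ (-(1 : ℝ) / 2) = ((lam ^ d : ℝ) ^ ((1 : ℝ) / 2))⁻¹ := by
      rw [neg_div, Real.rpow_neg hL0.le]
    rw [h3, ← div_eq_mul_inv, div_le_iff₀ (Real.rpow_pos_of_pos hL0 _)]
    calc Sig.det ^ ((1 : ℝ) / 2) ≤ (lam ^ d * B ^ d) ^ ((1 : ℝ) / 2) := h1
      _ = (lam ^ d) ^ ((1 : ℝ) / 2) * B ^ ((d : ℝ) / 2) := h2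
      _ = B ^ ((d : ℝ) / 2) * (lam ^ d) ^ ((1 : ℝ) / 2) := by ring
  · -- log part
    rw [hdetlamI]
    have hlogB : 0 ≤ Real.log B := Real.log_nonneg hB1
    rcases eq_or_lt_of_le hdetnn with h0 | hpos
    · rw [← h0, zero_div, Real.log_zero, mul_zero]
      positivity
    · have h1 : Real.log Sig.det ≤ Real.log (lam ^ d * B ^ d) :=
        Real.log_le_log hpos hdetle
      rw [Real.log_mul (ne_of_gt hL0) (by positivity), Real.log_pow, Real.log_pow] at h1
      rw [Real.log_div (ne_of_gt hpos) (ne_of_gt hL0), Real.log_pow]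
      have : Real.log Sig.det - d * Real.log lam ≤ d * Real.log B := by linarith
      linarith
end
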